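/- Let V be a finite-dimensional real vector space and let J and J₀ be two complex structures on V. Then the intersection V_J^{1,0} ∩ V_{J₀}^{0,1} (inside V^ℂ) is nonzero if and only if the linear map J + J₀ : V → V is not invertible. -/
import Mathlib


open TensorProduct

/-- Let `V` be a finite-dimensional real vector space and `J`, `J₀` two complex
structures on `V`.  Then `V_J^{1,0} ∩ V_{J₀}^{0,1} ≠ 0` inside the complexification `ℂ ⊗[ℝ] V`
if and only if `J + J₀ : V → V` is not invertible. -/
theorem holo_antiholo_intersect_iff_sum_not_invertible
    {V : Type*} [AddCommGroup V] [Module ℝ V] [FiniteDimensional ℝ V]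
    (J J₀ : V →ₗ[ℝ] V)
    (hJ : J ∘ₗ J = -LinearMap.id)
    (hJ₀ : J₀ ∘ₗ J₀ = -LinearMap.id) :
    (Module.End.eigenspace (J.baseChange ℂ) Complex.I ⊓
        Module.End.eigenspace (J₀.baseChange ℂ) (-Complex.I) ≠ ⊥) ↔
      ¬ Function.Bijective (J + J₀ : V →ₗ[ℝ] V) := by
  constructor
  · intro hne hbij
    rw [Submodule.ne_bot_iff] at hne
    obtain ⟨w, hw, hw0⟩ := hne
    rw [Submodule.mem_inf, Module.End.mem_eigenspace_iff,
      Module.End.mem_eigenspace_iff] at hw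
    have hzero : (J + J₀).baseChange ℂ w = 0 := by
      rw [LinearMap.baseChange_add, LinearMap.add_apply, hw.1, hw.2]
      simp
    have hinj : Function.Injective ((J + J₀).baseChange ℂ) := by
      rw [LinearMap.baseChange_eq_ltensor]
      exact Module.Flat.lTensor_preserves_injective_linearMap _ hbij.1
    exact hw0 (hinj (by simpa using hzero))
  · intro hnb
    have hni : ¬ Function.Injective (J + J₀ : V →ₗ[ℝ] V) := by
      intro hinj
      exact hnb ⟨hinj, (LinearMap.injective_iff_surjective).1 hinj⟩
    rw [injective_iff_map_eq_zero] at hni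
    push_neg at hni
    obtain ⟨v, hv0, hvne⟩ := hni
    have hJJv : J (J v) = -v := by
      have := congrArg (fun f => f v) hJ
      simpa using this
    have hJ₀v : J₀ v = -J v := by
      have h : J v + J₀ v = 0 := by simpa using hv0
      rw [eq_neg_iff_add_eq_zero, add_comm]; exact h
    have hJ₀Jv : J₀ (J v) = v := by
      have hJv : J v = -J₀ v := by rw [hJ₀v]; simp
      have h2 : J₀ (J₀ v) = -v := by
        have := congrArg (fun f => f v) hJ₀
        simpa using this
      rw [hJv, map_neg, h2, neg_neg]
    set w : ℂ ⊗[ℝ] V := (1 : ℂ) ⊗ₜ v - Complex.I ⊗ₜ (J v) with hwdef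
    have hwne2 : w ≠ 0 := by
      intro h0
      apply hvne
      have := congrArg (fun x => TensorProduct.lid ℝ V (LinearMap.rTensor V Complex.reLm x)) h0
      simpa [hwdef, sub_tmul] using this
    rw [Submodule.ne_bot_iff]
    refine ⟨w, ?_, hwne2⟩
    rw [Submodule.mem_inf, Module.End.mem_eigenspace_iff, Module.End.mem_eigenspace_iff]
    constructor
    · rw [hwdef]
      rw [map_sub, LinearMap.baseChange_tmul, LinearMap.baseChange_tmul, hJJv,
        smul_sub, TensorProduct.smul_tmul', TensorProduct.smul_tmul']
      simp [TensorProduct.tmul_neg, sub_eq_add_neg, add_comm, Complex.I_mul_I, neg_neg, TensorProduct.neg_tmul]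
    · rw [hwdef]
      rw [map_sub, LinearMap.baseChange_tmul, LinearMap.baseChange_tmul, hJ₀v, hJ₀Jv,
        smul_sub, TensorProduct.smul_tmul', TensorProduct.smul_tmul']
      simp [TensorProduct.tmul_neg, TensorProduct.neg_tmul, sub_eq_add_neg, add_comm,
        Complex.I_mul_I]
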